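/- Let N ≥ 1 be an integer, ν > 0 real, τ ∈ (0,1), and let 0 ≤ k ≤ N−1 be an integer. Then for every real x < 0 one has 0 ≤ 𝓘_k(x) ≤ 1. -/

import Mathlib

open Finset Filter

/-- Generalized Laguerre polynomial `L_j^ν(z)`. -/
noncomputable def Lag (ν : ℝ) (j : ℕ) (z : ℂ) : ℂ :=
  ∑ k ∈ range (j + 1),
    ((Real.Gamma ((j : ℝ) + ν + 1) /
        (((j - k).factorial : ℝ) * Real.Gamma (ν + (k : ℝ) + 1)) : ℝ) : ℂ) *
      (-z) ^ k / ((k.factorial : ℕ) : ℂ)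

/-- The partial sum `𝓘_k(z) = (1−τ²)^{ν+2k+1}·e^{τ√ν·z}·∑_{j=0}^{N−1−k} τ^{2j}·L_j^{ν+2k}(a·z)`
with `a = (1−τ²)√ν/τ`. -/
noncomputable def Ical (N : ℕ) (ν τ : ℝ) (k : ℕ) (z : ℂ) : ℂ :=
  (((1 - τ ^ 2) ^ (ν + 2 * k + 1) : ℝ) : ℂ) *
    Complex.exp (((τ * Real.sqrt ν : ℝ) : ℂ) * z) *
    ∑ j ∈ range (N - k),
      ((τ ^ (2 * j) : ℝ) : ℂ) * Lag (ν + 2 * k) j ((((1 - τ ^ 2) * Real.sqrt ν / τ : ℝ) : ℂ) * z)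


lemma Gamma_add_nat_eq (x : ℝ) (hx : 0 < x) (n : ℕ) :
    Real.Gamma (x + n) = (∏ l ∈ range n, (x + l)) * Real.Gamma x := by
  induction n with
  | zero => simp
  | succ n ih =>
    have h : x + (n + 1 : ℕ) = (x + n) + 1 := by push_cast; ring
    rw [h, Real.Gamma_add_one (by positivity), ih, prod_range_succ]
    ring

lemma shift_sum (M : ℕ) (c : ℕ → ℝ) (s : ℝ) :
    ∑ m ∈ range M, c m * (m * s ^ (m - 1)) =
      ∑ m ∈ range (M - 1), c (m + 1) * (m + 1) * s ^ m := by
  cases M with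
  | zero => simp
  | succ M =>
    rw [Finset.sum_range_succ']
    simp [mul_comm, mul_assoc, mul_left_comm]

noncomputable def bcoef (α : ℝ) (m : ℕ) : ℝ := (∏ l ∈ range m, (α + l)) / m.factorial

lemma bcoef_nonneg (α : ℝ) (hα : 0 < α) (m : ℕ) : 0 ≤ bcoef α m := by
  unfold bcoef
  apply div_nonneg _ (by positivity)
  exact Finset.prod_nonneg fun l _ => by positivity

lemma bcoef_succ (α : ℝ) (m : ℕ) : bcoef α (m + 1) * (m + 1) = bcoef α m * (α + m) := by
  unfold bcoef
  rw [prod_range_succ, Nat.factorial_succ]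
  have h1 : ((m + 1).factorial : ℝ) ≠ 0 := by positivity
  have : ((m + 1) * m.factorial : ℕ) = (m + 1) * (m.factorial) := rfl
  field_simp
  push_cast
  ring

lemma binom_partial_bound (α : ℝ) (hα : 0 < α) (M : ℕ) :
    ∀ t : ℝ, 0 ≤ t → t < 1 →
    ∑ m ∈ range M, bcoef α m * t ^ m ≤ (1 - t) ^ (-α) := by
  -- set S s = ∑ m, bcoef α m * s^m ; g s = (1-s)^α * S s antitone on [0,t]
  intro t ht0 ht1
  have h1t : (0:ℝ) < 1 - t := by linarith
  rcases Nat.eq_zero_or_pos M with hM | hM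
  · subst hM; simp [Real.rpow_nonneg h1t.le]
  set S : ℝ → ℝ := fun s => ∑ m ∈ range M, bcoef α m * s ^ m with hS
  set g : ℝ → ℝ := fun s => (1 - s) ^ α * S s with hg
  -- derivative facts
  have hSd : ∀ s : ℝ, HasDerivAt S (∑ m ∈ range M, bcoef α m * (m * s ^ (m - 1))) s := by
    intro s
    apply HasDerivAt.fun_sum
    intro m _
    exact (hasDerivAt_pow m s).const_mul _
  have hgd : ∀ s : ℝ, 0 ≤ s → s < 1 →
      HasDerivAt g ((1 - s) ^ α * (∑ m ∈ range M, bcoef α m * (m * s ^ (m - 1)))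
        + (α * (1 - s) ^ (α - 1) * (-1)) * S s) s := by
    intro s hs0 hs1
    have h1s : (0:ℝ) < 1 - s := by linarith
    have h1 : HasDerivAt (fun s : ℝ => (1 - s) ^ α) (α * (1 - s) ^ (α - 1) * (-1)) s := by
      have := (Real.hasStrictDerivAt_rpow_const (x := 1 - s) (p := α)
        (Or.inl h1s.ne')).hasDerivAt
      have h2 : HasDerivAt (fun s : ℝ => 1 - s) (-1) s := by
        simpa using (hasDerivAt_id s).const_sub 1
      exact this.comp s h2
    have := h1.fun_mul (hSd s)
    exact this.congr_deriv (by ring)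
  -- deriv nonpos
  have key : ∀ s : ℝ, 0 ≤ s → s < 1 →
      (1 - s) * (∑ m ∈ range M, bcoef α m * (m * s ^ (m - 1))) ≤ α * S s := by
    intro s hs0 hs1
    have hshift : ∑ m ∈ range M, bcoef α m * (m * s ^ (m - 1)) =
        ∑ m ∈ range (M - 1), bcoef α m * (α + m) * s ^ m := by
      rw [shift_sum M (bcoef α) s]
      refine Finset.sum_congr rfl fun m _ => ?_
      rw [bcoef_succ]
    have hfull : α * S s + s * (∑ m ∈ range M, bcoef α m * (m * s ^ (m - 1))) =
        ∑ m ∈ range M, bcoef α m * (α + m) * s ^ m := by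
      rw [hS, Finset.mul_sum, Finset.mul_sum, ← Finset.sum_add_distrib]
      refine Finset.sum_congr rfl fun m _ => ?_
      cases m with
      | zero => simp [mul_comm]
      | succ m =>
        have h : s ^ (m + 1) = s * s ^ m := pow_succ' s m
        simp only [Nat.add_sub_cancel, h]
        ring
    have hsub : ∑ m ∈ range (M - 1), bcoef α m * (α + m) * s ^ m ≤
        ∑ m ∈ range M, bcoef α m * (α + m) * s ^ m := by
      apply Finset.sum_le_sum_of_subset_of_nonneg
      · exact Finset.range_subset_range.2 (Nat.sub_le M 1)
      · intro m _ _
        have := bcoef_nonneg α hα m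
        have : (0:ℝ) ≤ α + m := by positivity
        have := bcoef_nonneg α hα m
        positivity
    nlinarith [hshift, hfull, hsub]
  -- conclude via antitonicity of g on [0, t]
  have hanti : AntitoneOn g (Set.Icc 0 t) := by
    apply antitoneOn_of_deriv_nonpos (convex_Icc 0 t)
    · intro s hs
      exact (hgd s hs.1 (lt_of_le_of_lt hs.2 ht1)).continuousAt.continuousWithinAt
    · intro s hs
      rw [interior_Icc] at hs
      exact (hgd s hs.1.le (lt_of_lt_of_le hs.2 ht1.le)).differentiableAt.differentiableWithinAt
    · intro s hs
      rw [interior_Icc] at hs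
      have hs0 : (0:ℝ) ≤ s := hs.1.le
      have hs1 : s < 1 := lt_of_lt_of_le hs.2 ht1.le
      have h1s : (0:ℝ) < 1 - s := by linarith
      rw [(hgd s hs0 hs1).deriv]
      have hsplit : (1 - s) ^ α = (1 - s) ^ (α - 1) * (1 - s) := by
        rw [← Real.rpow_add_one h1s.ne' (α - 1), sub_add_cancel]
      have hk := key s hs0 hs1
      have hnn : (0:ℝ) ≤ (1 - s) ^ (α - 1) := Real.rpow_nonneg h1s.le _
      have : (1 - s) ^ α * (∑ m ∈ range M, bcoef α m * (m * s ^ (m - 1)))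
          + α * (1 - s) ^ (α - 1) * (-1) * S s
          = (1 - s) ^ (α - 1) *
            ((1 - s) * (∑ m ∈ range M, bcoef α m * (m * s ^ (m - 1))) - α * S s) := by
        rw [hsplit]; ring
      rw [this]
      exact mul_nonpos_of_nonneg_of_nonpos hnn (by linarith)
  have hg0 : g 0 = 1 := by
    have hS0 : S 0 = 1 := by
      show ∑ m ∈ range M, bcoef α m * (0:ℝ) ^ m = 1
      rw [Finset.sum_eq_single_of_mem 0 (Finset.mem_range.2 hM)]
      · simp [bcoef]
      · intro m _ hm
        simp [zero_pow hm]
    simp [hg, hS0]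
  have hgt : g t ≤ 1 := by
    rw [← hg0]
    exact hanti (Set.left_mem_Icc.2 ht0) (Set.mem_Icc.2 ⟨ht0, le_refl t⟩) ht0
  have hpos : (0:ℝ) < (1 - t) ^ α := Real.rpow_pos_of_pos h1t α
  rw [Real.rpow_neg h1t.le, ← one_div, le_div_iff₀ hpos]
  have : g t = (1 - t) ^ α * S t := rfl
  rw [this] at hgt
  linarith [hgt]
/-- Real version of `Lag`. -/
noncomputable def LagR (ν : ℝ) (j : ℕ) (w : ℝ) : ℝ :=
  ∑ k ∈ range (j + 1),
    Real.Gamma ((j : ℝ) + ν + 1) / (((j - k).factorial : ℝ) * Real.Gamma (ν + (k : ℝ) + 1)) *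
      (-w) ^ k / (k.factorial : ℝ)

lemma Lag_ofReal (ν : ℝ) (j : ℕ) (w : ℝ) : Lag ν j ((w : ℝ) : ℂ) = ((LagR ν j w : ℝ) : ℂ) := by
  unfold Lag LagR
  push_cast
  norm_num

lemma LagR_nonneg (ν : ℝ) (hν : 0 < ν) (j : ℕ) (w : ℝ) (hw : w ≤ 0) : 0 ≤ LagR ν j w := by
  apply Finset.sum_nonneg
  intro i _
  have h1 : 0 < Real.Gamma ((j : ℝ) + ν + 1) := Real.Gamma_pos_of_pos (by positivity)
  have h2 : 0 < Real.Gamma (ν + (i : ℝ) + 1) := Real.Gamma_pos_of_pos (by positivity)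
  have h3 : (0:ℝ) ≤ (-w) ^ i := pow_nonneg (by linarith) i
  positivity

/-- For negative real arguments, `𝓘_k` is real with `0 ≤ 𝓘_k(x) ≤ 1`. -/
theorem Ical_bounded_on_negative_reals (N : ℕ) (hN : 1 ≤ N) (ν : ℝ) (hν : 0 < ν)
    (τ : ℝ) (hτ : τ ∈ Set.Ioo (0 : ℝ) 1) (k : ℕ) (hk : k ≤ N - 1)
    (x : ℝ) (hx : x < 0) :
    ∃ y : ℝ, Ical N ν τ k (x : ℂ) = (y : ℂ) ∧ 0 ≤ y ∧ y ≤ 1 := by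
  obtain ⟨hτ0, hτ1⟩ := hτ
  have ht0 : (0:ℝ) < τ ^ 2 := by positivity
  have ht1 : τ ^ 2 < 1 := by nlinarith
  have h1t : (0:ℝ) < 1 - τ ^ 2 := by linarith
  have hsν : 0 < Real.sqrt ν := Real.sqrt_pos.2 hν
  set μ : ℝ := ν + 2 * (k : ℝ) with hμdef
  have hμ : 0 < μ := by positivity
  set w : ℝ := (1 - τ ^ 2) * Real.sqrt ν / τ * x with hwdef
  have hw : w < 0 := by
    apply mul_neg_of_pos_of_neg _ hx
    positivity
  set u : ℝ := -w with hudef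
  have hu : 0 < u := by simpa [hudef] using hw
  set M : ℕ := N - k with hMdef
  have hM : 1 ≤ M := by omega
  set E : ℝ := Real.exp (τ * Real.sqrt ν * x) with hEdef
  have hE : 0 < E := Real.exp_pos _
  set A : ℝ := ∑ j ∈ range M, τ ^ (2 * j) * LagR μ j w with hAdef
  refine ⟨(1 - τ ^ 2) ^ (μ + 1) * E * A, ?_, ?_, ?_⟩
  · -- Ical equals the real value
    unfold Ical
    have harg : (((1 - τ ^ 2) * Real.sqrt ν / τ : ℝ) : ℂ) * (x : ℂ) = ((w : ℝ) : ℂ) := by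
      rw [hwdef]; push_cast; ring
    have hexp : Complex.exp (((τ * Real.sqrt ν : ℝ) : ℂ) * (x : ℂ)) = ((E : ℝ) : ℂ) := by
      rw [hEdef, ← Complex.ofReal_mul, ← Complex.ofReal_exp]
    have hord : ν + 2 * (k:ℝ) = μ := rfl
    simp only [harg, hexp, Lag_ofReal, hord]
    rw [hAdef]
    push_cast
    ring_nf
    rw [hMdef]
  · -- nonnegativity
    have hA : 0 ≤ A := by
      apply Finset.sum_nonneg
      intro j _
      exact mul_nonneg (by positivity) (LagR_nonneg μ hμ j w hw.le)
    have : (0:ℝ) ≤ (1 - τ ^ 2) ^ (μ + 1) := Real.rpow_nonneg h1t.le _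
    positivity
  · -- upper bound
    set t : ℝ := τ ^ 2 with htdef
    set v : ℝ := t * u / (1 - t) with hvdef
    have hv : 0 ≤ v := by positivity
    -- key bound on A
    have hkey : A ≤ (1 - t) ^ (-(μ + 1)) * Real.exp v := by
      have hstep1 : A = ∑ j ∈ range M, ∑ i ∈ range (j + 1),
          t ^ j * (Real.Gamma ((j : ℝ) + μ + 1) /
            (((j - i).factorial : ℝ) * Real.Gamma (μ + (i : ℝ) + 1)) * u ^ i / (i.factorial : ℝ)) := by
        rw [hAdef]
        refine Finset.sum_congr rfl fun j _ => ?_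
        rw [LagR, Finset.mul_sum]
        refine Finset.sum_congr rfl fun i _ => ?_
        rw [pow_mul]
      have hswap : A = ∑ i ∈ range M, ∑ j ∈ Finset.Ico i M,
          t ^ j * (Real.Gamma ((j : ℝ) + μ + 1) /
            (((j - i).factorial : ℝ) * Real.Gamma (μ + (i : ℝ) + 1)) * u ^ i / (i.factorial : ℝ)) := by
        rw [hstep1]
        simp only [Finset.range_eq_Ico]
        rw [Finset.sum_Ico_Ico_comm]
      have hinner : ∀ i ∈ range M, ∑ j ∈ Finset.Ico i M,
          t ^ j * (Real.Gamma ((j : ℝ) + μ + 1) /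
            (((j - i).factorial : ℝ) * Real.Gamma (μ + (i : ℝ) + 1)) * u ^ i / (i.factorial : ℝ))
          ≤ (1 - t) ^ (-(μ + 1)) * (v ^ i / (i.factorial : ℝ)) := by
        intro i hi
        rw [Finset.sum_Ico_eq_sum_range]
        have hΓi : 0 < Real.Gamma (μ + (i : ℝ) + 1) := Real.Gamma_pos_of_pos (by positivity)
        have hterm : ∀ m, t ^ (i + m) * (Real.Gamma (((i + m : ℕ) : ℝ) + μ + 1) /
            (((i + m - i).factorial : ℝ) * Real.Gamma (μ + (i : ℝ) + 1)) * u ^ i / (i.factorial : ℝ))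
            = (t ^ i * u ^ i / (i.factorial : ℝ)) * (bcoef (μ + i + 1) m * t ^ m) := by
          intro m
          have hsub : i + m - i = m := by omega
          have hΓ : Real.Gamma (((i + m : ℕ) : ℝ) + μ + 1) =
              (∏ l ∈ range m, ((μ + i + 1) + l)) * Real.Gamma (μ + (i : ℝ) + 1) := by
            have : ((i + m : ℕ) : ℝ) + μ + 1 = (μ + (i:ℝ) + 1) + (m : ℕ) := by push_cast; ring
            rw [this, Gamma_add_nat_eq _ (by positivity)]
          rw [hsub, hΓ, bcoef, pow_add]
          have hfm : (0:ℝ) < (m.factorial : ℝ) := by positivity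
          field_simp
        calc ∑ m ∈ range (M - i), t ^ (i + m) * (Real.Gamma (((i + m : ℕ) : ℝ) + μ + 1) /
              (((i + m - i).factorial : ℝ) * Real.Gamma (μ + (i : ℝ) + 1)) * u ^ i / (i.factorial : ℝ))
            = (t ^ i * u ^ i / (i.factorial : ℝ)) *
              ∑ m ∈ range (M - i), bcoef (μ + i + 1) m * t ^ m := by
              rw [Finset.mul_sum]
              exact Finset.sum_congr rfl fun m _ => hterm m
          _ ≤ (t ^ i * u ^ i / (i.factorial : ℝ)) * (1 - t) ^ (-(μ + i + 1)) := by
              apply mul_le_mul_of_nonneg_left _ (by positivity)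
              exact binom_partial_bound (μ + i + 1) (by positivity) (M - i) t ht0.le ht1
          _ = (1 - t) ^ (-(μ + 1)) * (v ^ i / (i.factorial : ℝ)) := by
              have h1 : (1 - t) ^ (-(μ + i + 1)) =
                  (1 - t) ^ (-(μ + 1)) * ((1 - t) ^ (i : ℕ))⁻¹ := by
                rw [← Real.rpow_natCast (1 - t) i, ← Real.rpow_neg h1t.le,
                  ← Real.rpow_add h1t]
                ring_nf
              rw [h1, hvdef, div_pow, mul_pow]
              have : ((1 - t) ^ i) ≠ 0 := by positivity
              field_simp
      calc A ≤ ∑ i ∈ range M, (1 - t) ^ (-(μ + 1)) * (v ^ i / (i.factorial : ℝ)) := by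
            rw [hswap]; exact Finset.sum_le_sum hinner
        _ = (1 - t) ^ (-(μ + 1)) * ∑ i ∈ range M, v ^ i / (i.factorial : ℝ) := by
            rw [Finset.mul_sum]
        _ ≤ (1 - t) ^ (-(μ + 1)) * Real.exp v := by
            apply mul_le_mul_of_nonneg_left (Real.sum_le_exp_of_nonneg hv M)
            exact Real.rpow_nonneg (by linarith) _
    -- identify exp v with E⁻¹
    have hvE : Real.exp v = E⁻¹ := by
      have : v = -(τ * Real.sqrt ν * x) := by
        rw [hvdef, hudef, hwdef, htdef]
        have h1t' : (1:ℝ) - τ ^ 2 ≠ 0 := h1t.ne'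
        field_simp
      rw [this, Real.exp_neg, hEdef]
    have hrp : (1 - t) ^ (μ + 1) * (1 - t) ^ (-(μ + 1)) = 1 := by
      rw [← Real.rpow_add h1t, add_neg_cancel, Real.rpow_zero]
    have hP : (0:ℝ) < (1 - t) ^ (μ + 1) := Real.rpow_pos_of_pos h1t _
    calc (1 - τ ^ 2) ^ (μ + 1) * E * A
        ≤ (1 - t) ^ (μ + 1) * E * ((1 - t) ^ (-(μ + 1)) * E⁻¹) := by
          rw [← hvE, ← htdef]
          exact mul_le_mul_of_nonneg_left hkey (by positivity)
      _ = ((1 - t) ^ (μ + 1) * (1 - t) ^ (-(μ + 1))) * (E * E⁻¹) := by ring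
      _ = 1 := by rw [hrp, mul_inv_cancel₀ hE.ne']; norm_num
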